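/- Let ψ : ℤ → ℂ satisfy h(n)·ψ(n+2) + (1 + a(n+1)·h(n))·ψ(n+1) + a(n)·ψ(n) = b·ψ(n), with ψ(n+1) + a(n)·ψ(n) ≠ 0 for all n. Define B(n) := b·ψ(n)/(ψ(n+1) + a(n)·ψ(n)). Then B satisfies the discrete Riccati equation -(b - a(n)·B(n))·h(n) + (B(n) - 1)·B(n+1) = 0 for all n. -/

import Mathlib

/-- the function `B(n) = b·ψ(n)/(ψ(n+1) + a(n)·ψ(n))`, built from a
solution `ψ` of `h·T²ψ + (1+ã·h)·Tψ + a·ψ = b·ψ`, satisfies the discrete Riccati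
equation `-(b - a·B)·h + (B - 1)·B̃ = 0`. -/
theorem riccati_solution_case_II
    (h a : ℤ → ℂ) (b : ℂ) (ψ : ℤ → ℂ)
    (hsol : ∀ n, h n * ψ (n + 2) + (1 + a (n + 1) * h n) * ψ (n + 1) + a n * ψ n
              = b * ψ n)
    (hden : ∀ n, ψ (n + 1) + a n * ψ n ≠ 0)
    (B : ℤ → ℂ)
    (hB : ∀ n, B n = b * ψ n / (ψ (n + 1) + a n * ψ n)) :
    ∀ n, -(b - a n * B n) * h n + (B n - 1) * B (n + 1) = 0 := by
  intro n
  have e := hsol n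
  have d1 := hden n
  have d2 := hden (n + 1)
  have h2 : n + 1 + 1 = n + 2 := by ring
  rw [hB n, hB (n + 1), h2]
  rw [h2] at d2
  have d3 : ψ (n + 2) + ψ (n + 1) * a (n + 1) ≠ 0 := by rwa [mul_comm] at d2
  field_simp
  linear_combination (-(b * ψ (n+1))) * e
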